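/- arXiv:1711.05012 — 2 statements merged into one kernel-verified Lean document; each statement's English description precedes it below -/
import Mathlib

section
/- Let X = (X_0, X_1, …, X_n) be a Gaussian vector with mean (m_0, m) ∈ ℝ^{n+1} and positive definite covariance matrix Σ, such that Σ(0,i) ≥ 0 for every i ∈ {1,…,n}. Then for every bounded non-decreasing measurable function φ : ℝ^n → ℝ, the map q ↦ E[φ(X_1,…,X_n) | X_0 = q] is non-decreasing in q. Similarly, if φ is non-increasing, this map is non-increasing. -/
open MeasureTheory

/-- Density of the Gaussian distribution `N(m, S)` on `ι → ℝ` (for `S` positive definite). -/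
noncomputable def gaussianPdf {ι : Type*} [Fintype ι] [DecidableEq ι]
    (m : ι → ℝ) (S : Matrix ι ι ℝ) (x : ι → ℝ) : ℝ :=
  Real.exp (-(dotProduct (x - m) (Matrix.mulVec S⁻¹ (x - m))) / 2) /
    Real.sqrt ((2 * Real.pi) ^ (Fintype.card ι) * S.det)

/-- The Gaussian measure `N(m, S)` on `ι → ℝ`, defined via its density. -/
noncomputable def gaussianMeasure {ι : Type*} [Fintype ι] [DecidableEq ι]
    (m : ι → ℝ) (S : Matrix ι ι ℝ) : Measure (ι → ℝ) :=
  volume.withDensity fun x => ENNReal.ofReal (gaussianPdf m S x)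

/-- The regular conditional distribution of `(X_1, …, X_n)` given `X_0 = q`, for
`(X_0, X_1, …, X_n) ~ N((m_0, m), Σ)`: it is Gaussian with mean `m + (q − m_0)v`, where
`v_i = Σ(0,i)/Σ(0,0)`, and covariance `Σ(i,j) − Σ(0,i)Σ(0,j)/Σ(0,0)` (independent of `q`). -/

noncomputable def condGaussian (n : ℕ) (m₀ : ℝ) (m : Fin n → ℝ)
    (S : Matrix (Fin (n + 1)) (Fin (n + 1)) ℝ) (q : ℝ) : Measure (Fin n → ℝ) :=
  gaussianMeasure
    (fun i => m i + (q - m₀) * (S 0 i.succ / S 0 0))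
    (Matrix.of fun i j => S i.succ j.succ - S 0 i.succ * S 0 j.succ / S 0 0)

noncomputable def condExpGaussian (n : ℕ) (m₀ : ℝ) (m : Fin n → ℝ)
    (S : Matrix (Fin (n + 1)) (Fin (n + 1)) ℝ) (φ : (Fin n → ℝ) → ℝ) (q : ℝ) : ℝ :=
  ∫ x, φ x ∂(condGaussian n m₀ m S q)


-- quadratic form lower bound
lemma quad_lower {k : ℕ} {M : Matrix (Fin k) (Fin k) ℝ} (hM : M.PosDef) :
    ∃ ε : ℝ, 0 < ε ∧ ∀ x : Fin k → ℝ,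
      ε * (∑ i, x i ^ 2) ≤ dotProduct x (M.mulVec x) := by
  have hcont : Continuous fun x : Fin k → ℝ => dotProduct x (M.mulVec x) := by
    unfold dotProduct Matrix.mulVec
    exact continuous_finset_sum _ fun i _ =>
      (continuous_apply i).mul <| continuous_finset_sum _ fun j _ =>
        (continuous_const.mul (continuous_apply j))
  have hgc : Continuous fun x : Fin k → ℝ => ∑ i, x i ^ 2 :=
    continuous_finset_sum _ fun i _ => (continuous_apply i).pow 2
  rcases Nat.eq_zero_or_pos k with hk | hk
  · subst hk
    exact ⟨1, one_pos, fun x => by simp [dotProduct]⟩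
  · set K : Set (Fin k → ℝ) := {x | ∑ i, x i ^ 2 = 1} with hK
    have hKc : IsCompact K := by
      have hclosed : IsClosed K := isClosed_eq hgc continuous_const
      have hsub : K ⊆ Metric.closedBall 0 1 := by
        intro x hx
        simp only [Metric.mem_closedBall, dist_zero_right]
        rw [pi_norm_le_iff_of_nonneg zero_le_one]
        intro i
        have h1 : x i ^ 2 ≤ 1 := by
          have := Finset.single_le_sum (f := fun j => x j ^ 2)
            (fun j _ => sq_nonneg _) (Finset.mem_univ i)
          rw [hx] at this; exact this
        have : |x i| ≤ 1 := (sq_le_one_iff_abs_le_one _).1 h1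
        simpa [Real.norm_eq_abs] using this
      exact (isCompact_closedBall 0 1).of_isClosed_subset hclosed hsub
    have hKne : K.Nonempty := by
      refine ⟨Pi.single ⟨0, hk⟩ 1, ?_⟩
      simp [hK, Pi.single_apply]
    obtain ⟨x₀, hx₀K, hmin⟩ := hKc.exists_isMinOn hKne hcont.continuousOn
    have hx₀ne : x₀ ≠ 0 := by
      intro h; rw [h] at hx₀K; simp [hK] at hx₀K
    have hε : 0 < dotProduct x₀ (M.mulVec x₀) := by
      have := hM.dotProduct_mulVec_pos hx₀ne
      simpa using this
    refine ⟨_, hε, fun x => ?_⟩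
    rcases eq_or_ne x 0 with rfl | hx
    · simp
    · have hSpos : 0 < ∑ i, x i ^ 2 := by
        rcases Function.ne_iff.1 hx with ⟨i, hi⟩
        exact Finset.sum_pos' (fun j _ => sq_nonneg _)
          ⟨i, Finset.mem_univ i, by simpa using pow_pos (abs_pos.2 (by simpa using hi)) 2 |>.trans_le (le_of_eq (sq_abs _))⟩
      set c : ℝ := (Real.sqrt (∑ i, x i ^ 2))⁻¹ with hc
      have hsq : Real.sqrt (∑ i, x i ^ 2) ^ 2 = ∑ i, x i ^ 2 := Real.sq_sqrt hSpos.le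
      have hcK : c • x ∈ K := by
        simp only [hK, Set.mem_setOf_eq, Pi.smul_apply, smul_eq_mul, mul_pow]
        rw [← Finset.mul_sum, ← hsq]
        rw [hc]
        field_simp
      have := hmin hcK
      simp only [Set.mem_setOf_eq] at this
      have hhom : dotProduct (c • x) (M.mulVec (c • x))
          = c * (c * dotProduct x (M.mulVec x)) := by
        rw [Matrix.mulVec_smul, smul_dotProduct, dotProduct_smul]
        simp [smul_eq_mul]
      rw [hhom] at this
      have hc2 : c * c = (∑ i, x i ^ 2)⁻¹ := by
        rw [hc, ← mul_inv, ← sq, hsq]  -- careful: (√S)⁻¹ * (√S)⁻¹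
      rw [← mul_assoc, hc2] at this
      calc dotProduct x₀ (M.mulVec x₀) * (∑ i, x i ^ 2)
          ≤ ((∑ i, x i ^ 2)⁻¹ * dotProduct x (M.mulVec x)) * (∑ i, x i ^ 2) := by
            exact mul_le_mul_of_nonneg_right this hSpos.le
        _ = dotProduct x (M.mulVec x) := by field_simp


lemma S00_pos {n : ℕ} {S : Matrix (Fin (n+1)) (Fin (n+1)) ℝ} (hS : S.PosDef) :
    0 < S 0 0 := by
  have h := hS.dotProduct_mulVec_pos (x := Pi.single 0 1) (by
    intro h
    have := congrFun h 0
    simp [Pi.single_apply] at this)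
  simpa [dotProduct, Matrix.mulVec, Pi.single_apply, Finset.sum_ite_eq',
    Fin.sum_univ_succ] using h

lemma schur_posDef {n : ℕ} {S : Matrix (Fin (n+1)) (Fin (n+1)) ℝ} (hS : S.PosDef) :
    (Matrix.of fun i j : Fin n =>
      S i.succ j.succ - S 0 i.succ * S 0 j.succ / S 0 0).PosDef := by
  have hsymm : ∀ i j, S i j = S j i := by
    intro i j
    have := hS.1.apply i j
    simpa using this.symm
  have h00 := S00_pos hS
  refine Matrix.PosDef.of_dotProduct_mulVec_pos ?_ ?_
  · ext i j
    simp only [Matrix.conjTranspose_apply, Matrix.of_apply, star_trivial]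
    rw [hsymm j.succ i.succ]
    ring
  · intro x hx
    set s : ℝ := ∑ i, S 0 i.succ * x i with hs
    set t : ℝ := -s / S 0 0 with ht
    set Q : ℝ := ∑ i, x i * ∑ j, S i.succ j.succ * x j with hQ
    set y : Fin (n+1) → ℝ := Fin.cons t x with hy
    have hyne : y ≠ 0 := by
      intro h
      apply hx
      funext i
      have := congrFun h i.succ
      simpa [hy, Fin.cons_succ] using this
    have hpos := hS.dotProduct_mulVec_pos hyne
    rw [star_trivial] at hpos
    have inner : ∀ a : Fin (n+1), (∑ j, S a j * y j)
        = S a 0 * t + ∑ j : Fin n, S a j.succ * x j := by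
      intro a
      rw [Fin.sum_univ_succ]
      simp [hy, Fin.cons_zero, Fin.cons_succ]
    have hR : dotProduct y (S.mulVec y)
        = t * (S 0 0 * t + s) + (t * s + Q) := by
      simp only [dotProduct, Matrix.mulVec]
      rw [Fin.sum_univ_succ]
      simp only [inner]
      simp only [hy, Fin.cons_zero, Fin.cons_succ]
      congr 1
      rw [hQ, Finset.mul_sum, ← Finset.sum_add_distrib]
      refine Finset.sum_congr rfl fun i _ => ?_
      rw [hsymm i.succ 0]
      ring
    have hL : dotProduct x ((Matrix.of fun i j : Fin n =>
        S i.succ j.succ - S 0 i.succ * S 0 j.succ / S 0 0).mulVec x)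
        = Q - s * s / S 0 0 := by
      simp only [dotProduct, Matrix.mulVec, Matrix.of_apply]
      have h1 : ∀ i : Fin n, (∑ j, (S i.succ j.succ - S 0 i.succ * S 0 j.succ / S 0 0) * x j)
          = (∑ j, S i.succ j.succ * x j) - S 0 i.succ / S 0 0 * s := by
        intro i
        simp_rw [sub_mul]
        rw [Finset.sum_sub_distrib]
        congr 1
        rw [hs, Finset.mul_sum]
        exact Finset.sum_congr rfl fun j _ => by ring
      calc (∑ i, x i * ∑ j, (S i.succ j.succ - S 0 i.succ * S 0 j.succ / S 0 0) * x j)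
          = ∑ i, (x i * (∑ j, S i.succ j.succ * x j)
              - (S 0 i.succ * x i) * (s / S 0 0)) :=
            Finset.sum_congr rfl fun i _ => by rw [h1 i]; ring
        _ = Q - s * s / S 0 0 := by
            rw [Finset.sum_sub_distrib, ← Finset.sum_mul, ← hs, hQ]
            ring
    simp only [star_trivial]
    rw [hL]
    rw [hR] at hpos
    have : t * (S 0 0 * t + s) + (t * s + Q) = Q - s * s / S 0 0 := by
      rw [ht]
      field_simp
      ring
    linarith [hpos, this]

lemma gaussianPdf_nonneg {k : ℕ} (m : Fin k → ℝ) (A : Matrix (Fin k) (Fin k) ℝ)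
    (x : Fin k → ℝ) : 0 ≤ gaussianPdf m A x := by
  unfold gaussianPdf
  positivity

lemma gaussianPdf_continuous {k : ℕ} (m : Fin k → ℝ) (A : Matrix (Fin k) (Fin k) ℝ) :
    Continuous (gaussianPdf m A) := by
  unfold gaussianPdf
  apply Continuous.div_const
  apply Real.continuous_exp.comp
  apply Continuous.div_const
  apply Continuous.neg
  have hsub : Continuous fun x : Fin k → ℝ => x - m := continuous_id.sub continuous_const
  have hq : Continuous fun y : Fin k → ℝ => dotProduct y (A⁻¹.mulVec y) := by
    simp only [dotProduct, Matrix.mulVec]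
    exact continuous_finset_sum _ fun i _ =>
      (continuous_apply i).mul <| continuous_finset_sum _ fun j _ =>
        (continuous_const.mul (continuous_apply j))
  exact hq.comp hsub

lemma integrable_gaussianPdf {k : ℕ} (m : Fin k → ℝ) {A : Matrix (Fin k) (Fin k) ℝ}
    (hA : A.PosDef) : Integrable (gaussianPdf m A) := by
  obtain ⟨ε, hε, hq⟩ := quad_lower hA.inv
  set c : ℝ := Real.sqrt ((2 * Real.pi) ^ (Fintype.card (Fin k)) * A.det) with hc
  have hcpos : 0 < c := by
    rw [hc]
    apply Real.sqrt_pos.2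
    exact mul_pos (pow_pos (by positivity) _) hA.det_pos
  have hg : Integrable (fun x : Fin k → ℝ =>
      c⁻¹ * ∏ i, Real.exp (-(ε/2) * (x i - m i) ^ 2)) := by
    refine Integrable.const_mul ?_ _
    exact Integrable.fintype_prod (f := fun (i : Fin k) (t : ℝ) =>
      Real.exp (-(ε/2) * (t - m i) ^ 2))
      (fun i => (integrable_exp_neg_mul_sq (by positivity)).comp_sub_right (m i))
  refine hg.mono' ((gaussianPdf_continuous m A).aestronglyMeasurable) ?_
  filter_upwards with x
  rw [Real.norm_eq_abs, abs_of_nonneg (gaussianPdf_nonneg m A x)]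
  unfold gaussianPdf
  rw [← hc, div_eq_inv_mul]
  apply mul_le_mul_of_nonneg_left _ (by positivity)
  rw [← Real.exp_sum]
  apply Real.exp_le_exp.2
  have := hq (x - m)
  have hsum : ∑ i, (-(ε/2) * ((x - m) i) ^ 2) = -(ε/2) * ∑ i, ((x - m) i) ^ 2 := by
    rw [Finset.mul_sum]
  simp only [Pi.sub_apply] at this hsum ⊢
  rw [hsum]
  linarith

lemma isFiniteMeasure_gaussianMeasure {k : ℕ} (m : Fin k → ℝ)
    {A : Matrix (Fin k) (Fin k) ℝ} (hA : A.PosDef) :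
    IsFiniteMeasure (gaussianMeasure m A) := by
  constructor
  rw [gaussianMeasure, withDensity_apply _ MeasurableSet.univ, Measure.restrict_univ]
  exact (integrable_gaussianPdf m hA).lintegral_lt_top

lemma integral_gaussianMeasure {k : ℕ} (m : Fin k → ℝ) (A : Matrix (Fin k) (Fin k) ℝ)
    (φ : (Fin k → ℝ) → ℝ) :
    ∫ x, φ x ∂(gaussianMeasure m A) = ∫ x, gaussianPdf m A x * φ x := by
  rw [gaussianMeasure]
  have h : (fun x => ENNReal.ofReal (gaussianPdf m A x))
      = fun x => ((Real.toNNReal (gaussianPdf m A x) : NNReal) : ENNReal) := rfl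
  rw [h, integral_withDensity_eq_integral_smul
    ((gaussianPdf_continuous m A).measurable.real_toNNReal)]
  congr 1
  funext x
  rw [NNReal.smul_def, Real.coe_toNNReal _ (gaussianPdf_nonneg m A x)]
  rfl


lemma integrable_gaussianPdf_mul {k : ℕ} (m : Fin k → ℝ) {A : Matrix (Fin k) (Fin k) ℝ}
    (hA : A.PosDef) (ψ : (Fin k → ℝ) → ℝ) (hmeas : Measurable ψ) (C : ℝ)
    (hC : ∀ x, |ψ x| ≤ C) : Integrable (fun x => gaussianPdf m A x * ψ x) := by
  refine ((integrable_gaussianPdf m hA).const_mul C).mono'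
    (((gaussianPdf_continuous m A).measurable.mul hmeas).aestronglyMeasurable) ?_
  filter_upwards with x
  rw [Real.norm_eq_abs, abs_mul, abs_of_nonneg (gaussianPdf_nonneg m A x)]
  calc gaussianPdf m A x * |ψ x| ≤ gaussianPdf m A x * C :=
        mul_le_mul_of_nonneg_left (hC x) (gaussianPdf_nonneg m A x)
    _ = C * gaussianPdf m A x := mul_comm _ _

lemma condExp_mono_aux (n : ℕ) (m₀ : ℝ) (m : Fin n → ℝ)
    (S : Matrix (Fin (n + 1)) (Fin (n + 1)) ℝ) (hS : S.PosDef)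
    (hnn : ∀ i : Fin n, 0 ≤ S 0 i.succ)
    (φ : (Fin n → ℝ) → ℝ) (hφmeas : Measurable φ)
    (hφbdd : ∃ C : ℝ, ∀ x, |φ x| ≤ C) (hφ : Monotone φ) :
    Monotone (condExpGaussian n m₀ m S φ) := by
  intro a b hab
  obtain ⟨C, hC⟩ := hφbdd
  have hA : (Matrix.of fun i j : Fin n =>
      S i.succ j.succ - S 0 i.succ * S 0 j.succ / S 0 0).PosDef := schur_posDef hS
  have h00 := S00_pos hS
  unfold condExpGaussian condGaussian
  set A : Matrix (Fin n) (Fin n) ℝ := Matrix.of fun i j : Fin n =>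
    S i.succ j.succ - S 0 i.succ * S 0 j.succ / S 0 0 with hAdef
  rw [integral_gaussianMeasure, integral_gaussianMeasure]
  set Ma : Fin n → ℝ := fun i => m i + (a - m₀) * (S 0 i.succ / S 0 0) with hMa
  set Mb : Fin n → ℝ := fun i => m i + (b - m₀) * (S 0 i.succ / S 0 0) with hMb
  set c : Fin n → ℝ := fun i => (b - a) * (S 0 i.succ / S 0 0) with hcdef
  have hc0 : ∀ i, 0 ≤ c i := fun i =>
    mul_nonneg (sub_nonneg.2 hab) (div_nonneg (hnn i) h00.le)
  have hpdfshift : ∀ x, gaussianPdf Mb A (x + c) = gaussianPdf Ma A x := by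
    intro x
    unfold gaussianPdf
    rw [show x + c - Mb = x - Ma by
      funext i
      simp only [Pi.add_apply, Pi.sub_apply, hMa, hMb, hcdef]
      ring]
  have hshift : ∫ x, gaussianPdf Mb A x * φ x = ∫ x, gaussianPdf Ma A x * φ (x + c) := by
    rw [← integral_add_right_eq_self (μ := volume)
      (fun y => gaussianPdf Mb A y * φ y) c]
    congr 1
    funext x
    rw [hpdfshift x]
  rw [hshift]
  have hint1 : Integrable (fun x => gaussianPdf Ma A x * φ x) :=
    integrable_gaussianPdf_mul Ma hA φ hφmeas C hC
  have hint2 : Integrable (fun x => gaussianPdf Ma A x * φ (x + c)) :=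
    integrable_gaussianPdf_mul Ma hA (fun x => φ (x + c))
      (hφmeas.comp (measurable_add_const c)) C (fun x => hC _)
  refine integral_mono hint1 hint2 fun x => ?_
  refine mul_le_mul_of_nonneg_left (hφ fun i => ?_) (gaussianPdf_nonneg Ma A x)
  exact le_add_of_nonneg_right (hc0 i)

theorem stmt_2 (n : ℕ) (m₀ : ℝ) (m : Fin n → ℝ)
    (S : Matrix (Fin (n + 1)) (Fin (n + 1)) ℝ) (hS : S.PosDef)
    (hnn : ∀ i : Fin n, 0 ≤ S 0 i.succ)
    (φ : (Fin n → ℝ) → ℝ) (hφmeas : Measurable φ)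
    (hφbdd : ∃ C : ℝ, ∀ x, |φ x| ≤ C) :
    (Monotone φ → Monotone (condExpGaussian n m₀ m S φ)) ∧
      (Antitone φ → Antitone (condExpGaussian n m₀ m S φ)) := by
  constructor
  · exact fun hφ => condExp_mono_aux n m₀ m S hS hnn φ hφmeas hφbdd hφ
  · intro hφ a b hab
    obtain ⟨C, hC⟩ := hφbdd
    have h := condExp_mono_aux n m₀ m S hS hnn (fun x => -φ x) hφmeas.neg
      ⟨C, fun x => by rw [abs_neg]; exact hC x⟩
      (fun x y hxy => neg_le_neg (hφ hxy)) hab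
    simp only [condExpGaussian, integral_neg] at h ⊢
    linarith
end

section
/- Let Σ be an n × n symmetric positive definite matrix, μ = N(0, Σ), and let A ⊆ ℝ^n be a monotone (increasing or decreasing) Borel set. Then for every v ∈ ℝ^n and every i ∈ {1,…,n}, the limit lim_{r↓0} [μ(A + [−r,r]e_i + [−r,r]v) − μ(A + [−r,r]v)]/r exists and equals I_{i,μ}(A) := liminf_{r↓0} [μ(A + [−r,r]e_i) − μ(A)]/r. -/
open MeasureTheory ENNReal

/-- `A + [−r,r]v = {a + t·v : a ∈ A, |t| ≤ r}`. -/
def thicken {ι : Type*} (A : Set (ι → ℝ)) (v : ι → ℝ) (r : ℝ) : Set (ι → ℝ) :=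
  {x | ∃ a ∈ A, ∃ t : ℝ, |t| ≤ r ∧ x = a + t • v}

/-- The influence of the vector `v` on the Borel set `A` under the measure `μ`:
`I_{v,μ}(A) = liminf_{r↓0} (μ(A + [−r,r]v) − μ(A))/r ∈ [0,+∞]`. -/
noncomputable def influence {ι : Type*} (μ : MeasureTheory.Measure (ι → ℝ))
    (v : ι → ℝ) (A : Set (ι → ℝ)) : ℝ≥0∞ :=
  Filter.liminf (fun r : ℝ => (μ (thicken A v r) - μ A) / ENNReal.ofReal r)
    (nhdsWithin 0 (Set.Ioi 0))

/-- A set `A ⊆ ℝ^ι` is increasing if `x ∈ A` and `x ≤ y` coordinatewise imply `y ∈ A`. -/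
def IncreasingSet {ι : Type*} (A : Set (ι → ℝ)) : Prop :=
  ∀ x ∈ A, ∀ y : ι → ℝ, x ≤ y → y ∈ A

/-- A set `A ⊆ ℝ^ι` is decreasing if `x ∈ A` and `y ≤ x` coordinatewise imply `y ∈ A`. -/
def DecreasingSet {ι : Type*} (A : Set (ι → ℝ)) : Prop :=
  ∀ x ∈ A, ∀ y : ι → ℝ, y ≤ x → y ∈ A
section Aux

open Filter Set Topology

variable {n : ℕ}

lemma subset_thicken (A : Set (Fin n → ℝ)) (v : Fin n → ℝ) {r : ℝ} (hr : 0 ≤ r) :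
    A ⊆ thicken A v r := by
  intro a ha
  exact ⟨a, ha, 0, by simpa using hr, by simp⟩

lemma thicken_mono (A : Set (Fin n → ℝ)) (v : Fin n → ℝ) {r r' : ℝ} (h : r ≤ r') :
    thicken A v r ⊆ thicken A v r' := by
  rintro x ⟨a, ha, t, ht, rfl⟩
  exact ⟨a, ha, t, ht.trans h, rfl⟩

lemma thicken_neg (A : Set (Fin n → ℝ)) (v : Fin n → ℝ) (r : ℝ) :
    thicken A (-v) r = thicken A v r := by
  ext x
  constructor
  · rintro ⟨a, ha, t, ht, rfl⟩
    exact ⟨a, ha, -t, by simpa using ht, by simp [smul_neg, neg_smul]⟩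
  · rintro ⟨a, ha, t, ht, rfl⟩
    exact ⟨a, ha, -t, by simpa using ht, by simp [smul_neg, neg_smul]⟩

lemma IncreasingSet.thicken {A : Set (Fin n → ℝ)} (hA : IncreasingSet A) (v : Fin n → ℝ)
    (r : ℝ) : IncreasingSet (thicken A v r) := by
  rintro x ⟨a, ha, t, ht, rfl⟩ y hxy
  refine ⟨a + (y - (a + t • v)), hA a ha _ ?_, t, ht, by abel⟩
  intro j
  have := hxy j
  simp only [Pi.add_apply, Pi.sub_apply, Pi.smul_apply, smul_eq_mul] at this ⊢
  linarith

lemma IncreasingSet.preimage_add {A : Set (Fin n → ℝ)} (hA : IncreasingSet A) (c : Fin n → ℝ) :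
    IncreasingSet ((fun x => x + c) ⁻¹' A) := by
  intro x hx y hxy
  exact hA _ hx _ (fun j => by have := hxy j; simp only [Pi.add_apply]; linarith)

lemma thicken_single_eq {A : Set (Fin n → ℝ)} (hA : IncreasingSet A) (i : Fin n) {r : ℝ}
    (hr : 0 ≤ r) :
    thicken A (Pi.single i 1) r = (fun x => x + r • (Pi.single i 1 : Fin n → ℝ)) ⁻¹' A := by
  ext x
  constructor
  · rintro ⟨a, ha, t, ht, rfl⟩
    refine hA a ha _ ?_
    have htr : 0 ≤ t + r := by
      rcases abs_le.1 ht with ⟨h1, _⟩; linarith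
    intro j
    have hsj : (0:ℝ) ≤ (Pi.single i 1 : Fin n → ℝ) j := by
      rcases eq_or_ne j i with h | h <;> simp [h, Pi.single_apply]
    have : 0 ≤ (t + r) * (Pi.single i 1 : Fin n → ℝ) j := mul_nonneg htr hsj
    simp only [Pi.add_apply, Pi.smul_apply, smul_eq_mul]
    nlinarith
  · intro hx
    refine ⟨x + r • (Pi.single i 1 : Fin n → ℝ), hx, -r, by rw [abs_neg, abs_of_nonneg hr], by
      simp only [neg_smul]; abel⟩

lemma IncreasingSet.closure_add_mem {C : Set (Fin n → ℝ)} (hC : IncreasingSet C)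
    {x : Fin n → ℝ} (hx : x ∈ closure C) {δ : ℝ} (hδ : 0 < δ) :
    x + δ • (1 : Fin n → ℝ) ∈ interior C := by
  obtain ⟨a, ha, hdist⟩ := Metric.mem_closure_iff.1 hx (δ / 2) (by linarith)
  rw [mem_interior]
  refine ⟨Metric.ball (x + δ • (1 : Fin n → ℝ)) (δ / 2), ?_, Metric.isOpen_ball,
    Metric.mem_ball_self (by linarith)⟩
  intro y hy
  refine hC a ha y ?_
  intro j
  have h1 : dist (a j) (x j) < δ / 2 := by
    have := lt_of_le_of_lt (dist_le_pi_dist a x j) (by rwa [dist_comm x a] at hdist)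
    exact this
  have h2 : dist (y j) (x j + δ) < δ / 2 := by
    have := lt_of_le_of_lt (dist_le_pi_dist y (x + δ • (1 : Fin n → ℝ)) j) hy
    simpa using this
  rw [Real.dist_eq] at h1 h2
  have := abs_lt.1 h1
  have := abs_lt.1 h2
  simp only [Pi.add_apply, Pi.smul_apply, Pi.one_apply, smul_eq_mul, mul_one] at *
  linarith [this.1, this.2, (abs_lt.1 h1).1, (abs_lt.1 h1).2]

end Aux
section Aux2

open Filter Set Topology

variable {n : ℕ}

lemma IncreasingSet.volume_frontier {C : Set (Fin n → ℝ)} (hC : IncreasingSet C) :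
    volume (frontier C) = 0 := by
  have key : ∀ x ∈ frontier C, ∀ δ : ℝ, 0 < δ → x + δ • (1 : Fin n → ℝ) ∉ frontier C := by
    intro x hx δ hδ hmem
    exact hmem.2 (hC.closure_add_mem hx.1 hδ)
  have hFc : IsClosed (frontier C) := isClosed_frontier
  have loc : ∀ m : ℕ, volume (frontier C ∩ Metric.closedBall (0 : Fin n → ℝ) m) = 0 := by
    intro m
    set F := frontier C ∩ Metric.closedBall (0 : Fin n → ℝ) m with hF
    have hFm : MeasurableSet F := (hFc.inter Metric.isClosed_closedBall).measurableSet
    by_contra h0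
    have hBm : volume (Metric.closedBall (0 : Fin n → ℝ) (m + 1)) < ⊤ :=
      (Metric.isBounded_closedBall).measure_lt_top
    set Bm := volume (Metric.closedBall (0 : Fin n → ℝ) (m + 1)) with hBmdef
    have hdiv : Bm / volume F ≠ ⊤ := by
      exact ENNReal.div_lt_top hBm.ne h0 |>.ne
    obtain ⟨K, hK⟩ := ENNReal.exists_nat_gt hdiv
    -- with δ = 1/(K+1), translated copies of F are disjoint
    set δ : ℝ := 1 / (K + 1) with hδdef
    have hδpos : 0 < δ := by positivity
    set T : ℕ → Set (Fin n → ℝ) :=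
      fun k => (fun x => x + -(((k : ℝ) * δ) • (1 : Fin n → ℝ))) ⁻¹' F with hT
    have hTmeas : ∀ k, MeasurableSet (T k) :=
      fun k => hFm.preimage (measurable_add_const _)
    have hTvol : ∀ k, volume (T k) = volume F := by
      intro k
      exact measure_preimage_add_right volume _ F
    have hTdisj : ∀ k l : ℕ, k < l → Disjoint (T k) (T l) := by
      intro k l hkl
      rw [Set.disjoint_left]
      intro x hxk hxl
      have h1 : x + -(((k : ℝ) * δ) • (1 : Fin n → ℝ)) ∈ F := hxk
      have h2 : x + -(((l : ℝ) * δ) • (1 : Fin n → ℝ)) ∈ F := hxl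
      have hc : (0:ℝ) < ((l : ℝ) - k) * δ := by
        have : (k:ℝ) < l := by exact_mod_cast hkl
        have : (0:ℝ) < (l:ℝ) - k := by linarith
        positivity
    -- x - lδ1 + ((l-k)δ)•1 = x - kδ1
      have heq : (x + -(((l : ℝ) * δ) • (1 : Fin n → ℝ))) + (((l : ℝ) - k) * δ) • (1 : Fin n → ℝ)
          = x + -(((k : ℝ) * δ) • (1 : Fin n → ℝ)) := by
        have : (((l : ℝ) - k) * δ) • (1 : Fin n → ℝ)
            = ((l : ℝ) * δ) • (1 : Fin n → ℝ) - ((k : ℝ) * δ) • (1 : Fin n → ℝ) := by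
          rw [← sub_smul]; ring_nf
        rw [this]; abel
      exact key _ h2.1 _ hc (by rw [heq]; exact h1.1)
    have hTsub : ∀ k, k ≤ K → T k ⊆ Metric.closedBall (0 : Fin n → ℝ) (m + 1) := by
      intro k hk x hx
      have hxF : x + -(((k : ℝ) * δ) • (1 : Fin n → ℝ)) ∈ F := hx
      have hxm : ‖x + -(((k : ℝ) * δ) • (1 : Fin n → ℝ))‖ ≤ (m:ℝ) := by
        have := hxF.2
        rwa [Metric.mem_closedBall, dist_zero_right] at this
      have hone : ‖(1 : Fin n → ℝ)‖ ≤ 1 := by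
        refine (pi_norm_le_iff_of_nonneg zero_le_one).2 (fun j => by simp)
      have hkd : 0 ≤ (k:ℝ) * δ := by positivity
      have hkd1 : (k:ℝ) * δ ≤ 1 := by
        rw [hδdef]
        rw [mul_one_div, div_le_one (by positivity)]
        have : (k:ℝ) ≤ K := by exact_mod_cast hk
        linarith
      have : ‖x‖ ≤ (m:ℝ) + 1 := by
        have h3 : ‖(((k : ℝ) * δ) • (1 : Fin n → ℝ))‖ ≤ 1 := by
          rw [norm_smul, Real.norm_eq_abs, abs_of_nonneg hkd]
          calc (k:ℝ) * δ * ‖(1 : Fin n → ℝ)‖ ≤ 1 * 1 :=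
            mul_le_mul hkd1 hone (norm_nonneg _) zero_le_one
          _ = 1 := by ring
        calc ‖x‖ = ‖(x + -(((k : ℝ) * δ) • (1 : Fin n → ℝ))) + (((k : ℝ) * δ) • (1 : Fin n → ℝ))‖ := by
              congr 1; abel
        _ ≤ ‖x + -(((k : ℝ) * δ) • (1 : Fin n → ℝ))‖ + ‖(((k : ℝ) * δ) • (1 : Fin n → ℝ))‖ :=
              norm_add_le _ _
        _ ≤ (m:ℝ) + 1 := by linarith
      rwa [Metric.mem_closedBall, dist_zero_right]
    have hsum : ((K:ℝ≥0∞) + 1) * volume F ≤ Bm := by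
      have hdisj' : (↑(Finset.range (K + 1)) : Set ℕ).PairwiseDisjoint T := by
        intro a _ b _ hab
        rcases lt_or_gt_of_ne hab with h | h
        · exact hTdisj a b h
        · exact (hTdisj b a h).symm
      have := measure_biUnion_finset (μ := volume) hdisj' (fun b _ => hTmeas b)
      have hsub : (⋃ k ∈ Finset.range (K + 1), T k) ⊆ Metric.closedBall (0 : Fin n → ℝ) (m + 1) := by
        intro x hx
        simp only [Set.mem_iUnion, Finset.mem_range] at hx
        obtain ⟨k, hk, hxk⟩ := hx
        exact hTsub k (Nat.lt_succ_iff.1 hk) hxk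
      calc ((K:ℝ≥0∞) + 1) * volume F = ∑ _k ∈ Finset.range (K + 1), volume F := by
            rw [Finset.sum_const, Finset.card_range, nsmul_eq_mul]
            congr 1
            push_cast; ring
      _ = volume (⋃ k ∈ Finset.range (K + 1), T k) := by
            rw [this]
            exact Finset.sum_congr rfl (fun k _ => (hTvol k).symm)
      _ ≤ Bm := measure_mono hsub
    have hlt : Bm < ((K:ℝ≥0∞)) * volume F := by
      exact (ENNReal.div_lt_iff (Or.inl h0) (Or.inr hBm.ne)).1 hK
    have : ((K:ℝ≥0∞)) * volume F ≤ ((K:ℝ≥0∞) + 1) * volume F :=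
      mul_le_mul_left (by simp) _
    exact absurd (lt_of_lt_of_le (lt_of_lt_of_le hlt this) hsum) (lt_irrefl _)
  have hcover : frontier C ⊆ ⋃ m : ℕ, frontier C ∩ Metric.closedBall (0 : Fin n → ℝ) m := by
    intro x hx
    obtain ⟨m, hm⟩ := exists_nat_ge ‖x‖
    exact Set.mem_iUnion.2 ⟨m, hx, by rwa [Metric.mem_closedBall, dist_zero_right]⟩
  exact measure_mono_null hcover (measure_iUnion_null loc)

end Aux2
section Aux3

open Filter Set Topology

variable {n : ℕ}

lemma measure_closure_eq_of_increasing {μ : Measure (Fin n → ℝ)}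
    (hμ : μ ≪ (volume : Measure (Fin n → ℝ))) {C : Set (Fin n → ℝ)} (hC : IncreasingSet C) :
    μ (closure C) = μ C := by
  have hnull : μ (frontier C) = 0 := hμ hC.volume_frontier
  have h1 : μ (closure C) ≤ μ C := by
    have hsub : closure C ⊆ interior C ∪ frontier C := by
      intro x hx
      by_cases hi : x ∈ interior C
      · exact Or.inl hi
      · exact Or.inr ⟨hx, hi⟩
    calc μ (closure C) ≤ μ (interior C) + μ (frontier C) :=
          le_trans (measure_mono hsub) (measure_union_le _ _)
    _ = μ (interior C) := by rw [hnull, add_zero]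
    _ ≤ μ C := measure_mono interior_subset
  exact le_antisymm h1 (measure_mono subset_closure)

lemma mem_closure_of_forall_thicken {A : Set (Fin n → ℝ)} {v : Fin n → ℝ} {y : Fin n → ℝ}
    (h : ∀ r : ℝ, 0 < r → y ∈ thicken A v r) : y ∈ closure A := by
  rw [Metric.mem_closure_iff]
  intro ρ hρ
  set r : ℝ := ρ / (‖v‖ + 1) with hrdef
  have hr : 0 < r := by positivity
  obtain ⟨a, ha, t, ht, hy⟩ := h r hr
  refine ⟨a, ha, ?_⟩
  have hdy : dist y a = |t| * ‖v‖ := by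
    have hya : y - a = t • v := by rw [hy]; abel
    rw [dist_eq_norm, hya, norm_smul, Real.norm_eq_abs]
  rw [hdy]
  calc |t| * ‖v‖ ≤ r * ‖v‖ := mul_le_mul_of_nonneg_right ht (norm_nonneg v)
  _ < r * (‖v‖ + 1) := by nlinarith [norm_nonneg v]
  _ = ρ := by rw [hrdef]; field_simp

lemma eventually_closure_thicken_iff {A : Set (Fin n → ℝ)} (hA : IncreasingSet A)
    (v : Fin n → ℝ) {x : Fin n → ℝ} (hx : x ∉ frontier A) :
    ∀ᶠ r in nhdsWithin (0:ℝ) (Set.Ioi 0), (x ∈ closure (thicken A v r) ↔ x ∈ A) := by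
  by_cases hxA : x ∈ A
  · filter_upwards [self_mem_nhdsWithin] with r hr
    simp only [hxA, iff_true]
    exact subset_closure (subset_thicken A v (le_of_lt hr) hxA)
  · have hex : ∃ r₀ : ℝ, 0 < r₀ ∧ x ∉ closure (thicken A v r₀) := by
      by_contra hcon
      push_neg at hcon
      have h1 : ∀ δ : ℝ, 0 < δ → ∀ r : ℝ, 0 < r → x + δ • (1 : Fin n → ℝ) ∈ thicken A v r :=
        fun δ hδ r hr =>
          interior_subset ((hA.thicken v r).closure_add_mem (hcon r hr) hδ)
      have h2 : ∀ δ : ℝ, 0 < δ → x + δ • (1 : Fin n → ℝ) ∈ closure A :=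
        fun δ hδ => mem_closure_of_forall_thicken (fun r hr => h1 δ hδ r hr)
      have htend : Filter.Tendsto (fun δ : ℝ => x + δ • (1 : Fin n → ℝ))
          (nhdsWithin (0:ℝ) (Set.Ioi 0)) (nhds x) := by
        have hcont : Continuous (fun δ : ℝ => x + δ • (1 : Fin n → ℝ)) :=
          continuous_const.add (continuous_id.smul continuous_const)
        have := hcont.continuousAt (x := (0:ℝ)).tendsto
        simp only [zero_smul, add_zero] at this
        exact this.mono_left nhdsWithin_le_nhds
      have hxc : x ∈ closure (closure A) :=
        mem_closure_of_tendsto htend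
          (by filter_upwards [self_mem_nhdsWithin] with δ hδ; exact h2 δ hδ)
      rw [closure_closure] at hxc
      exact hx ⟨hxc, fun hi => hxA (interior_subset hi)⟩
    obtain ⟨r₀, hr₀, hnot⟩ := hex
    filter_upwards [Ioc_mem_nhdsGT_of_mem ⟨le_refl (0:ℝ), hr₀⟩] with r hr
    constructor
    · intro hcl
      exact absurd (closure_mono (thicken_mono A v hr.2) hcl) hnot
    · intro h; exact absurd h hxA
end Aux3
section Aux4

open Filter Set Topology

variable {n : ℕ}

/-- Quadratic form of the inverse matrix. -/
noncomputable def gq (S : Matrix (Fin n) (Fin n) ℝ) (x : Fin n → ℝ) : ℝ :=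
  dotProduct x (S⁻¹.mulVec x)

/-- Normalizing constant of the Gaussian density. -/
noncomputable def gc (S : Matrix (Fin n) (Fin n) ℝ) : ℝ :=
  (Real.sqrt ((2 * Real.pi) ^ (Fintype.card (Fin n)) * S.det))⁻¹

lemma gpdf_eq (S : Matrix (Fin n) (Fin n) ℝ) (x : Fin n → ℝ) :
    gaussianPdf 0 S x = gc S * Real.exp (-(gq S x) / 2) := by
  unfold gaussianPdf gc gq
  rw [sub_zero, div_eq_inv_mul]

lemma gpdf_nonneg (S : Matrix (Fin n) (Fin n) ℝ) (x : Fin n → ℝ) : 0 ≤ gaussianPdf 0 S x := by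
  unfold gaussianPdf
  exact div_nonneg (Real.exp_pos _).le (Real.sqrt_nonneg _)

lemma gc_nonneg (S : Matrix (Fin n) (Fin n) ℝ) : 0 ≤ gc S := by
  unfold gc; positivity

lemma continuous_gq (S : Matrix (Fin n) (Fin n) ℝ) : Continuous (gq S) := by
  have : gq S = fun x => ∑ j, x j * (∑ k, S⁻¹ j k * x k) := by
    funext x; rfl
  rw [this]
  exact continuous_finset_sum _ fun j _ =>
    (continuous_apply j).mul (continuous_finset_sum _ fun k _ =>
      continuous_const.mul (continuous_apply k))

lemma continuous_gpdf (S : Matrix (Fin n) (Fin n) ℝ) : Continuous (gaussianPdf 0 S) := by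
  have : gaussianPdf 0 S = fun x => gc S * Real.exp (-(gq S x) / 2) := by
    funext x; exact gpdf_eq S x
  rw [this]
  exact continuous_const.mul (Real.continuous_exp.comp
    ((continuous_gq S).neg.div_const 2))

lemma exists_coercive {S : Matrix (Fin n) (Fin n) ℝ} (hS : S.PosDef) (i : Fin n) :
    ∃ ε : ℝ, 0 < ε ∧ ∀ x : Fin n → ℝ, ε * (∑ j, x j ^ 2) ≤ gq S x := by
  have hposdef : (S⁻¹).PosDef := hS.inv
  have hpos : ∀ x : Fin n → ℝ, x ≠ 0 → 0 < gq S x := by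
    intro x hx
    have := hposdef.re_dotProduct_pos (x := x) hx
    simpa [gq] using this
  set K : Set (Fin n → ℝ) := {x | ∑ j, x j ^ 2 = 1} with hK
  have hKclosed : IsClosed K :=
    isClosed_eq (continuous_finset_sum _ fun j _ => (continuous_apply j).pow 2) continuous_const
  have hKsub : K ⊆ Metric.closedBall 0 1 := by
    intro x hx
    rw [Metric.mem_closedBall, dist_zero_right]
    refine (pi_norm_le_iff_of_nonneg zero_le_one).2 (fun j => ?_)
    rw [Real.norm_eq_abs]
    have hsq : x j ^ 2 ≤ 1 := by
      calc x j ^ 2 ≤ ∑ k, x k ^ 2 :=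
        Finset.single_le_sum (fun k _ => sq_nonneg (x k)) (Finset.mem_univ j)
      _ = 1 := hx
    nlinarith [abs_nonneg (x j), sq_abs (x j)]
  have hKcompact : IsCompact K :=
    (isCompact_closedBall 0 1).of_isClosed_subset hKclosed hKsub
  have hKne : K.Nonempty := by
    refine ⟨Pi.single i 1, ?_⟩
    simp only [hK, Set.mem_setOf_eq]
    rw [Finset.sum_eq_single i]
    · simp
    · intro j _ hji; rw [Pi.single_eq_of_ne hji]; ring
    · intro h; exact absurd (Finset.mem_univ i) h
  obtain ⟨z, hzK, hmin'⟩ := hKcompact.exists_isMinOn hKne ((continuous_gq S).continuousOn)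
  have hmin : ∀ y ∈ K, gq S z ≤ gq S y := fun y hy => hmin' hy
  have hz0 : z ≠ 0 := by
    intro h
    rw [h] at hzK
    simp only [hK, Set.mem_setOf_eq] at hzK
    simp at hzK
  refine ⟨gq S z, hpos z hz0, ?_⟩
  intro x
  by_cases hxz : ∑ j, x j ^ 2 = 0
  · have hx0 : x = 0 := by
      funext j
      have h1 : x j ^ 2 = 0 := by
        have := Finset.single_le_sum (fun k (_ : k ∈ Finset.univ) => sq_nonneg (x k))
          (Finset.mem_univ j)
        nlinarith [sq_nonneg (x j)]
      exact pow_eq_zero_iff (n := 2) (by norm_num) |>.1 h1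
    rw [hxz, hx0, mul_zero]
    simp [gq, Matrix.mulVec_zero, dotProduct_zero]
  · have hsum_pos : 0 < ∑ j, x j ^ 2 :=
      lt_of_le_of_ne (Finset.sum_nonneg fun j _ => sq_nonneg (x j)) (Ne.symm hxz)
    set t : ℝ := Real.sqrt (∑ j, x j ^ 2) with ht
    have htpos : 0 < t := Real.sqrt_pos.2 hsum_pos
    set y : Fin n → ℝ := t⁻¹ • x with hy
    have hyK : y ∈ K := by
      simp only [hK, Set.mem_setOf_eq, hy]
      have : ∑ j, (t⁻¹ * x j) ^ 2 = t⁻¹^2 * ∑ j, x j ^ 2 := by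
        rw [Finset.mul_sum]; exact Finset.sum_congr rfl fun j _ => by ring
      simp only [Pi.smul_apply, smul_eq_mul]
      rw [this, ht, ← Real.sqrt_inv, Real.sq_sqrt (by positivity)]
      field_simp
    have hxty : x = t • y := by
      rw [hy, smul_smul, mul_inv_cancel₀ (ne_of_gt htpos), one_smul]
    have hgq : gq S x = t^2 * gq S y := by
      rw [hxty]
      unfold gq
      rw [Matrix.mulVec_smul, smul_dotProduct, dotProduct_smul]
      simp only [smul_eq_mul]; ring
    have : gq S z ≤ gq S y := hmin y hyK
    have ht2 : t ^ 2 = ∑ j, x j ^ 2 := Real.sq_sqrt hsum_pos.le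
    rw [hgq, ← ht2]
    nlinarith [sq_nonneg t]

lemma integrable_exp_abs_sq_1d (b : ℝ) {a : ℝ} (ha : 0 < a) :
    MeasureTheory.Integrable (fun t : ℝ => Real.exp (b * |t| - a * t ^ 2)) := by
  have hbound : ∀ t : ℝ, b * |t| - a * t ^ 2 ≤ b ^ 2 / a - (3 * a / 4) * t ^ 2 := by
    intro t
    have hd : b ^ 2 / a * a = b ^ 2 := div_mul_cancel₀ _ (ne_of_gt ha)
    nlinarith [sq_nonneg (b - a * |t| / 2), sq_abs t, mul_pos ha ha]
  refine MeasureTheory.Integrable.mono'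
    ((integrable_exp_neg_mul_sq (show (0:ℝ) < 3 * a / 4 by linarith)).const_mul (Real.exp (b^2/a)))
    ?_ ?_
  · exact (Real.continuous_exp.comp
      ((continuous_const.mul continuous_abs).sub
        (continuous_const.mul (continuous_pow 2)))).aestronglyMeasurable
  · refine Filter.Eventually.of_forall (fun t => ?_)
    rw [Real.norm_eq_abs, abs_of_nonneg (Real.exp_pos _).le, ← Real.exp_add]
    apply Real.exp_le_exp.2
    have := hbound t
    calc b * |t| - a * t ^ 2 ≤ b ^ 2 / a - (3 * a / 4) * t ^ 2 := hbound t
    _ = b ^ 2 / a + -(3 * a / 4) * t ^ 2 := by ring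

lemma integrable_exp_gauss (b : ℝ) {a : ℝ} (ha : 0 < a) :
    MeasureTheory.Integrable
      (fun x : Fin n → ℝ => Real.exp (b * ∑ j, |x j| - a * ∑ j, x j ^ 2)) := by
  have heq : (fun x : Fin n → ℝ => Real.exp (b * ∑ j, |x j| - a * ∑ j, x j ^ 2))
      = fun x => ∏ j, Real.exp (b * |x j| - a * x j ^ 2) := by
    funext x
    rw [← Real.exp_sum]
    congr 1
    rw [Finset.sum_sub_distrib, ← Finset.mul_sum, ← Finset.mul_sum]
  rw [heq]
  exact MeasureTheory.Integrable.fintype_prod (𝕜 := ℝ)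
    (fun _ => integrable_exp_abs_sq_1d b ha)

end Aux4
section Aux5

open Filter Set Topology

variable {n : ℕ}

lemma inv_symm_entries {S : Matrix (Fin n) (Fin n) ℝ} (hS : S.PosDef) :
    ∀ j k, S⁻¹ j k = S⁻¹ k j := by
  intro j k
  have h := (hS.inv).1.apply j k
  simpa using h.symm

lemma gq_sub_single {S : Matrix (Fin n) (Fin n) ℝ} (hS : S.PosDef) (i : Fin n)
    (x : Fin n → ℝ) (s : ℝ) :
    gq S (x - s • (Pi.single i 1 : Fin n → ℝ))
      = gq S x - 2 * s * (S⁻¹.mulVec x i) + s ^ 2 * S⁻¹ i i := by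
  have hsym := inv_symm_entries hS
  have hY : S⁻¹.mulVec (Pi.single i 1 : Fin n → ℝ) = fun j => S⁻¹ j i := by
    rw [Matrix.mulVec_single]
    funext j; simp
  have hxY : dotProduct x (fun j => S⁻¹ j i) = S⁻¹.mulVec x i := by
    simp only [dotProduct, Matrix.mulVec]
    exact Finset.sum_congr rfl (fun k _ => by rw [hsym k i]; ring)
  have heY : dotProduct (Pi.single i (1:ℝ)) (fun j => S⁻¹ j i) = S⁻¹ i i := by
    rw [single_dotProduct]; ring
  have heX : dotProduct (Pi.single i (1:ℝ)) (S⁻¹.mulVec x) = S⁻¹.mulVec x i := by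
    rw [single_dotProduct]; ring
  unfold gq
  rw [Matrix.mulVec_sub, Matrix.mulVec_smul, hY]
  rw [sub_dotProduct, smul_dotProduct, dotProduct_sub,
      dotProduct_sub, dotProduct_smul, dotProduct_smul, hxY, heY, heX]
  simp only [smul_eq_mul]
  ring

lemma mulVec_sub_single {S : Matrix (Fin n) (Fin n) ℝ} (i : Fin n) (x : Fin n → ℝ) (s : ℝ) :
    S⁻¹.mulVec (x - s • (Pi.single i 1 : Fin n → ℝ)) i
      = S⁻¹.mulVec x i - s * S⁻¹ i i := by
  rw [Matrix.mulVec_sub, Matrix.mulVec_smul, Matrix.mulVec_single]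
  simp [smul_eq_mul]

lemma hasDerivAt_gpdf {S : Matrix (Fin n) (Fin n) ℝ} (hS : S.PosDef) (i : Fin n)
    (x : Fin n → ℝ) (s : ℝ) :
    HasDerivAt (fun s : ℝ => gaussianPdf 0 S (x - s • (Pi.single i 1 : Fin n → ℝ)))
      ((S⁻¹.mulVec (x - s • (Pi.single i 1 : Fin n → ℝ)) i) *
        gaussianPdf 0 S (x - s • (Pi.single i 1 : Fin n → ℝ))) s := by
  set w : ℝ := S⁻¹.mulVec x i with hw
  set κ : ℝ := S⁻¹ i i with hκ
  have hfun : (fun s : ℝ => gaussianPdf 0 S (x - s • (Pi.single i 1 : Fin n → ℝ)))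
      = fun s : ℝ => gc S * Real.exp (-(gq S x - 2 * s * w + s ^ 2 * κ) / 2) := by
    funext u
    rw [gpdf_eq, gq_sub_single hS]
  rw [hfun]
  have hp : HasDerivAt (fun s : ℝ => -(gq S x - 2 * s * w + s ^ 2 * κ) / 2) (w - s * κ) s := by
    have h1 : HasDerivAt (fun s : ℝ => gq S x - 2 * s * w + s ^ 2 * κ)
        (0 - 2 * w + κ * (2 * s)) s := by
      have ha : HasDerivAt (fun s : ℝ => 2 * s * w) (2 * w) s := by
        have h0 := (hasDerivAt_id s).const_mul (2 * w)
        have hfe : (fun y : ℝ => 2 * w * id y) = fun s : ℝ => 2 * s * w := by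
          funext u; simp [id]; ring
        rw [hfe] at h0
        simpa using h0
      have hb : HasDerivAt (fun s : ℝ => s ^ 2 * κ) (κ * (2 * s)) s := by
        have h0 := (hasDerivAt_pow 2 s).const_mul κ
        have hfe : (fun y : ℝ => κ * y ^ 2) = fun s : ℝ => s ^ 2 * κ := by
          funext u; ring
        rw [hfe] at h0
        simpa using h0
      exact ((hasDerivAt_const s (gq S x)).sub ha).add hb
    have h2 := h1.neg.div_const 2
    exact h2.congr_deriv (by ring)
  have h3 := (hp.exp).const_mul (gc S)
  refine h3.congr_deriv ?_
  rw [gpdf_eq, gq_sub_single hS, mulVec_sub_single]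
  ring

lemma sum_sq_sub_single (i : Fin n) (x : Fin n → ℝ) (s : ℝ) :
    ∑ j, (x j - s * (Pi.single i 1 : Fin n → ℝ) j) ^ 2
      = (∑ j, x j ^ 2) - 2 * s * x i + s ^ 2 := by
  have hterm : ∀ j, (x j - s * (Pi.single i 1 : Fin n → ℝ) j) ^ 2
      = x j ^ 2 - 2 * s * (x j * (Pi.single i 1 : Fin n → ℝ) j)
        + s ^ 2 * ((Pi.single i 1 : Fin n → ℝ) j) ^ 2 := by
    intro j; ring
  simp_rw [hterm]
  rw [Finset.sum_add_distrib, Finset.sum_sub_distrib, ← Finset.mul_sum, ← Finset.mul_sum]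
  have h1 : ∑ j, x j * (Pi.single i 1 : Fin n → ℝ) j = x i := by
    have : ∀ j, x j * (Pi.single i 1 : Fin n → ℝ) j = if j = i then x j else 0 := by
      intro j; rcases eq_or_ne j i with h|h <;> simp [h, Pi.single_apply]
    simp_rw [this]
    rw [Finset.sum_ite_eq' Finset.univ i (fun j => x j)]
    simp
  have h2 : ∑ j, ((Pi.single i 1 : Fin n → ℝ) j) ^ 2 = 1 := by
    have : ∀ j, ((Pi.single i 1 : Fin n → ℝ) j) ^ 2 = if j = i then 1 else 0 := by
      intro j; rcases eq_or_ne j i with h|h <;> simp [h, Pi.single_apply]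
    simp_rw [this]
    rw [Finset.sum_ite_eq' Finset.univ i (fun _ => (1:ℝ))]
    simp
  rw [h1, h2]
  ring

end Aux5
section Aux6

open Filter Set Topology

variable {n : ℕ}

/-- Dominating function for the difference quotients of the Gaussian density. -/
noncomputable def gDom (S : Matrix (Fin n) (Fin n) ℝ) (i : Fin n) (ε : ℝ) (x : Fin n → ℝ) : ℝ :=
  (∑ j, |S⁻¹ i j|) * gc S * Real.exp ((1 + ε) * ∑ j, |x j| - ε / 2 * ∑ j, x j ^ 2)

lemma gDom_integrable (S : Matrix (Fin n) (Fin n) ℝ) (i : Fin n) {ε : ℝ} (hε : 0 < ε) :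
    MeasureTheory.Integrable (gDom S i ε) := by
  unfold gDom
  exact (integrable_exp_gauss (1 + ε) (half_pos hε)).const_mul _

lemma gDom_nonneg (S : Matrix (Fin n) (Fin n) ℝ) (i : Fin n) (ε : ℝ) (x : Fin n → ℝ) :
    0 ≤ gDom S i ε x := by
  unfold gDom
  have h : (0:ℝ) ≤ ∑ j, |S⁻¹ i j| := Finset.sum_nonneg fun j _ => abs_nonneg _
  exact mul_nonneg (mul_nonneg h (gc_nonneg S)) (Real.exp_pos _).le

lemma mulVec_apply_abs_le (S : Matrix (Fin n) (Fin n) ℝ) (i : Fin n) (x : Fin n → ℝ) :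
    |S⁻¹.mulVec x i| ≤ (∑ j, |S⁻¹ i j|) * ∑ j, |x j| := by
  have h1 : S⁻¹.mulVec x i = ∑ j, S⁻¹ i j * x j := by
    simp [Matrix.mulVec, dotProduct]
  rw [h1]
  calc |∑ j, S⁻¹ i j * x j| ≤ ∑ j, |S⁻¹ i j * x j| := Finset.abs_sum_le_sum_abs _ _
  _ = ∑ j, |S⁻¹ i j| * |x j| := by simp_rw [abs_mul]
  _ ≤ ∑ j, (∑ k, |S⁻¹ i k|) * |x j| := by
      refine Finset.sum_le_sum fun j _ => ?_
      exact mul_le_mul_of_nonneg_right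
        (Finset.single_le_sum (fun k _ => abs_nonneg (S⁻¹ i k)) (Finset.mem_univ j))
        (abs_nonneg _)
  _ = (∑ j, |S⁻¹ i j|) * ∑ j, |x j| := by rw [← Finset.mul_sum]

lemma deriv_le_gDom {S : Matrix (Fin n) (Fin n) ℝ} (hS : S.PosDef) (i : Fin n) {ε : ℝ}
    (hε : 0 < ε) (hco : ∀ x : Fin n → ℝ, ε * (∑ j, x j ^ 2) ≤ gq S x) (x : Fin n → ℝ)
    {s : ℝ} (h0 : 0 ≤ s) (h1 : s ≤ 1) :
    |S⁻¹.mulVec (x - s • (Pi.single i 1 : Fin n → ℝ)) i *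
      gaussianPdf 0 S (x - s • (Pi.single i 1 : Fin n → ℝ))| ≤ gDom S i ε x := by
  set Ma : ℝ := ∑ j, |S⁻¹ i j| with hMa
  set T1 : ℝ := ∑ j, |x j| with hT1
  set T2 : ℝ := ∑ j, x j ^ 2 with hT2
  have hMa0 : 0 ≤ Ma := Finset.sum_nonneg fun j _ => abs_nonneg _
  have hT10 : 0 ≤ T1 := Finset.sum_nonneg fun j _ => abs_nonneg _
  have hxiT1 : |x i| ≤ T1 :=
    Finset.single_le_sum (fun k (_ : k ∈ Finset.univ) => abs_nonneg (x k)) (Finset.mem_univ i)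
  -- first factor
  have hfac1 : |S⁻¹.mulVec (x - s • (Pi.single i 1 : Fin n → ℝ)) i| ≤ Ma * (T1 + 1) := by
    rw [mulVec_sub_single]
    have hw : |S⁻¹.mulVec x i| ≤ Ma * T1 := mulVec_apply_abs_le S i x
    have hκ : |S⁻¹ i i| ≤ Ma :=
      Finset.single_le_sum (fun k (_ : k ∈ Finset.univ) => abs_nonneg (S⁻¹ i k))
        (Finset.mem_univ i)
    calc |S⁻¹.mulVec x i - s * S⁻¹ i i| ≤ |S⁻¹.mulVec x i| + |s * S⁻¹ i i| := abs_sub _ _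
    _ ≤ Ma * T1 + 1 * Ma := by
        have : |s * S⁻¹ i i| = s * |S⁻¹ i i| := by rw [abs_mul, abs_of_nonneg h0]
        rw [this]
        have h2 : s * |S⁻¹ i i| ≤ 1 * Ma := by
          apply mul_le_mul h1 hκ (abs_nonneg _) zero_le_one
        linarith
    _ = Ma * (T1 + 1) := by ring
  -- second factor
  have hfac2 : gaussianPdf 0 S (x - s • (Pi.single i 1 : Fin n → ℝ))
      ≤ gc S * Real.exp (ε * T1 - ε / 2 * T2) := by
    rw [gpdf_eq]
    apply mul_le_mul_of_nonneg_left _ (gc_nonneg S)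
    apply Real.exp_le_exp.2
    have hsum : ∑ j, ((x - s • (Pi.single i 1 : Fin n → ℝ)) j) ^ 2 = T2 - 2 * s * x i + s ^ 2 := by
      have : ∀ j, (x - s • (Pi.single i 1 : Fin n → ℝ)) j
          = x j - s * (Pi.single i 1 : Fin n → ℝ) j := by
        intro j; simp
      simp_rw [this]
      exact sum_sq_sub_single i x s
    have hgq : ε * (T2 - 2 * s * x i + s ^ 2) ≤ gq S (x - s • (Pi.single i 1 : Fin n → ℝ)) := by
      have := hco (x - s • (Pi.single i 1 : Fin n → ℝ))
      rwa [hsum] at this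
    have hsx : s * x i ≤ T1 := by
      calc s * x i ≤ s * |x i| := by
            apply mul_le_mul_of_nonneg_left (le_abs_self _) h0
      _ ≤ 1 * T1 := mul_le_mul h1 hxiT1 (abs_nonneg _) zero_le_one
      _ = T1 := one_mul T1
    have hs2 : 0 ≤ ε * s ^ 2 / 2 := by positivity
    calc -(gq S (x - s • (Pi.single i 1 : Fin n → ℝ))) / 2
        ≤ -(ε * (T2 - 2 * s * x i + s ^ 2)) / 2 := by linarith
    _ = -(ε / 2) * T2 + ε * (s * x i) - ε * s ^ 2 / 2 := by ring
    _ ≤ -(ε / 2) * T2 + ε * T1 - 0 := by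
        have := mul_le_mul_of_nonneg_left hsx hε.le
        linarith
    _ = ε * T1 - ε / 2 * T2 := by ring
  have hpdf0 : 0 ≤ gaussianPdf 0 S (x - s • (Pi.single i 1 : Fin n → ℝ)) := gpdf_nonneg S _
  rw [abs_mul, abs_of_nonneg hpdf0]
  calc |S⁻¹.mulVec (x - s • (Pi.single i 1 : Fin n → ℝ)) i| *
        gaussianPdf 0 S (x - s • (Pi.single i 1 : Fin n → ℝ))
      ≤ (Ma * (T1 + 1)) * (gc S * Real.exp (ε * T1 - ε / 2 * T2)) := by
        exact mul_le_mul hfac1 hfac2 hpdf0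
          (mul_nonneg hMa0 (by linarith : (0:ℝ) ≤ T1 + 1))
  _ ≤ Ma * gc S * Real.exp ((1 + ε) * T1 - ε / 2 * T2) := by
      have hexp : (T1 + 1) * Real.exp (ε * T1 - ε / 2 * T2)
          ≤ Real.exp T1 * Real.exp (ε * T1 - ε / 2 * T2) :=
        mul_le_mul_of_nonneg_right (Real.add_one_le_exp T1) (Real.exp_pos _).le
      have heq : Real.exp T1 * Real.exp (ε * T1 - ε / 2 * T2)
          = Real.exp ((1 + ε) * T1 - ε / 2 * T2) := by
        rw [← Real.exp_add]; congr 1; ring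
      calc Ma * (T1 + 1) * (gc S * Real.exp (ε * T1 - ε / 2 * T2))
          = Ma * gc S * ((T1 + 1) * Real.exp (ε * T1 - ε / 2 * T2)) := by ring
      _ ≤ Ma * gc S * (Real.exp T1 * Real.exp (ε * T1 - ε / 2 * T2)) := by
          apply mul_le_mul_of_nonneg_left hexp
          exact mul_nonneg hMa0 (gc_nonneg S)
      _ = Ma * gc S * Real.exp ((1 + ε) * T1 - ε / 2 * T2) := by rw [heq]
  _ = gDom S i ε x := rfl

lemma gpdf_diff_le {S : Matrix (Fin n) (Fin n) ℝ} (hS : S.PosDef) (i : Fin n) {ε : ℝ}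
    (hε : 0 < ε) (hco : ∀ x : Fin n → ℝ, ε * (∑ j, x j ^ 2) ≤ gq S x) (x : Fin n → ℝ)
    {r : ℝ} (hr0 : 0 < r) (hr1 : r ≤ 1) :
    |gaussianPdf 0 S (x - r • (Pi.single i 1 : Fin n → ℝ)) - gaussianPdf 0 S x|
      ≤ gDom S i ε x * r := by
  set f : ℝ → ℝ := fun s => gaussianPdf 0 S (x - s • (Pi.single i 1 : Fin n → ℝ)) with hf
  set f' : ℝ → ℝ := fun s => S⁻¹.mulVec (x - s • (Pi.single i 1 : Fin n → ℝ)) i *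
    gaussianPdf 0 S (x - s • (Pi.single i 1 : Fin n → ℝ)) with hf'
  have hderiv : ∀ s ∈ Set.Icc (0:ℝ) r, HasDerivWithinAt f (f' s) (Set.Icc (0:ℝ) r) s :=
    fun s _ => (hasDerivAt_gpdf hS i x s).hasDerivWithinAt
  have hbound : ∀ s ∈ Set.Icc (0:ℝ) r, ‖f' s‖ ≤ gDom S i ε x := by
    intro s hs
    rw [Real.norm_eq_abs]
    exact deriv_le_gDom hS i hε hco x hs.1 (hs.2.trans hr1)
  have := (convex_Icc (0:ℝ) r).norm_image_sub_le_of_norm_hasDerivWithin_le hderiv hbound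
    (Set.left_mem_Icc.2 hr0.le) (Set.right_mem_Icc.2 hr0.le)
  rw [Real.norm_eq_abs, Real.norm_eq_abs, sub_zero] at this
  have hfr : f 0 = gaussianPdf 0 S x := by
    rw [hf]; simp
  rw [hfr] at this
  calc |gaussianPdf 0 S (x - r • (Pi.single i 1 : Fin n → ℝ)) - gaussianPdf 0 S x|
      ≤ gDom S i ε x * |r| := this
  _ = gDom S i ε x * r := by rw [abs_of_pos hr0]

lemma tendsto_slope_gpdf {S : Matrix (Fin n) (Fin n) ℝ} (hS : S.PosDef) (i : Fin n)
    (x : Fin n → ℝ) :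
    Filter.Tendsto
      (fun r : ℝ => (gaussianPdf 0 S (x - r • (Pi.single i 1 : Fin n → ℝ)) -
        gaussianPdf 0 S x) / r)
      (nhdsWithin (0:ℝ) (Set.Ioi 0))
      (nhds (S⁻¹.mulVec x i * gaussianPdf 0 S x)) := by
  have hd := hasDerivAt_gpdf hS i x 0
  simp only [zero_smul, sub_zero] at hd
  have := hasDerivAt_iff_tendsto_slope.1 hd
  have h2 := this.mono_left (nhdsWithin_mono (0:ℝ) (fun y hy => by
    simp only [Set.mem_compl_iff, Set.mem_singleton_iff]
    exact ne_of_gt hy))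
  have hf0 : gaussianPdf 0 S (x - (0:ℝ) • (Pi.single i 1 : Fin n → ℝ)) = gaussianPdf 0 S x := by
    simp
  refine h2.congr (fun r => ?_)
  rw [slope_def_field, sub_zero, hf0]

lemma integrable_gpdf {S : Matrix (Fin n) (Fin n) ℝ} (hS : S.PosDef) (i : Fin n) :
    MeasureTheory.Integrable (gaussianPdf 0 S) := by
  obtain ⟨ε, hε, hco⟩ := exists_coercive hS i
  refine MeasureTheory.Integrable.mono'
    ((integrable_exp_gauss (0:ℝ) (half_pos hε)).const_mul (gc S)) ?_ ?_
  · exact (continuous_gpdf S).aestronglyMeasurable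
  · refine Filter.Eventually.of_forall (fun x => ?_)
    rw [Real.norm_eq_abs, abs_of_nonneg (gpdf_nonneg S x), gpdf_eq]
    apply mul_le_mul_of_nonneg_left _ (gc_nonneg S)
    apply Real.exp_le_exp.2
    have := hco x
    have h2 : (0:ℝ) * ∑ j, |x j| = 0 := by ring
    rw [h2]
    linarith

end Aux6
section Aux7

open Filter Set Topology

variable {n : ℕ}

lemma gauss_measure_eq (S : Matrix (Fin n) (Fin n) ℝ) (hS : S.PosDef) (i : Fin n)
    {D : Set (Fin n → ℝ)} (hD : MeasurableSet D) :
    gaussianMeasure 0 S D = ENNReal.ofReal (∫ y in D, gaussianPdf 0 S y) := by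
  unfold gaussianMeasure
  rw [MeasureTheory.withDensity_apply _ hD]
  rw [MeasureTheory.ofReal_integral_eq_lintegral_ofReal
    ((integrable_gpdf hS i).integrableOn)
    (Filter.Eventually.of_forall (fun y => gpdf_nonneg S y))]

lemma gauss_measure_preimage_add (S : Matrix (Fin n) (Fin n) ℝ) (hS : S.PosDef) (i : Fin n)
    (c : Fin n → ℝ) {D : Set (Fin n → ℝ)} (hD : MeasurableSet D) :
    gaussianMeasure 0 S ((fun x => x + c) ⁻¹' D)
      = ENNReal.ofReal (∫ y in D, gaussianPdf 0 S (y - c)) := by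
  unfold gaussianMeasure
  rw [MeasureTheory.withDensity_apply _ (hD.preimage (measurable_add_const c))]
  have hmp : MeasureTheory.MeasurePreserving (fun x : Fin n → ℝ => x + c) volume volume :=
    MeasureTheory.measurePreserving_add_right volume c
  have hemb : MeasurableEmbedding (fun x : Fin n → ℝ => x + c) :=
    (MeasurableEquiv.addRight c).measurableEmbedding
  have key := hmp.setLIntegral_comp_preimage_emb hemb
    (fun y => ENNReal.ofReal (gaussianPdf 0 S (y - c))) D
  have heq : ∀ a : Fin n → ℝ, ENNReal.ofReal (gaussianPdf 0 S ((a + c) - c))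
      = ENNReal.ofReal (gaussianPdf 0 S a) := by
    intro a; congr 1; congr 1; abel
  rw [show (fun a : Fin n → ℝ => ENNReal.ofReal (gaussianPdf 0 S ((a + c) - c)))
      = fun a => ENNReal.ofReal (gaussianPdf 0 S a) from funext heq] at key
  rw [key]
  rw [MeasureTheory.ofReal_integral_eq_lintegral_ofReal
    (((integrable_gpdf hS i).comp_sub_right c).integrableOn)
    (Filter.Eventually.of_forall (fun y => gpdf_nonneg S _))]

lemma quotient_eq (S : Matrix (Fin n) (Fin n) ℝ) (hS : S.PosDef) (i : Fin n)
    {D : Set (Fin n → ℝ)} (hD : MeasurableSet D) {r : ℝ} (hr : 0 < r) :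
    (gaussianMeasure 0 S ((fun x => x + r • (Pi.single i 1 : Fin n → ℝ)) ⁻¹' D)
        - gaussianMeasure 0 S D) / ENNReal.ofReal r
      = ENNReal.ofReal (∫ y, D.indicator (fun y =>
          (gaussianPdf 0 S (y - r • (Pi.single i 1 : Fin n → ℝ)) - gaussianPdf 0 S y) / r) y) := by
  rw [gauss_measure_preimage_add S hS i _ hD, gauss_measure_eq S hS i hD]
  rw [← ENNReal.ofReal_sub _ (MeasureTheory.integral_nonneg (fun y => gpdf_nonneg S y))]
  rw [← ENNReal.ofReal_div_of_pos hr]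
  congr 1
  rw [MeasureTheory.integral_indicator hD]
  have h1 : MeasureTheory.IntegrableOn
      (fun y => gaussianPdf 0 S (y - r • (Pi.single i 1 : Fin n → ℝ))) D :=
    ((integrable_gpdf hS i).comp_sub_right _).integrableOn
  have h2 : MeasureTheory.IntegrableOn (gaussianPdf 0 S) D :=
    (integrable_gpdf hS i).integrableOn
  rw [MeasureTheory.integral_div]
  rw [MeasureTheory.integral_sub h1 h2]

lemma main_tendsto {S : Matrix (Fin n) (Fin n) ℝ} (hS : S.PosDef) {A : Set (Fin n → ℝ)}
    (hA : IncreasingSet A) (i : Fin n)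
    (E : ℝ → Set (Fin n → ℝ)) (hEm : ∀ r : ℝ, 0 < r → MeasurableSet (E r))
    (hconv : ∀ x, x ∉ frontier A → ∀ᶠ r in nhdsWithin (0:ℝ) (Set.Ioi 0), (x ∈ E r ↔ x ∈ A)) :
    Filter.Tendsto (fun r : ℝ => ∫ y, (E r).indicator
        (fun y => (gaussianPdf 0 S (y - r • (Pi.single i 1 : Fin n → ℝ))
          - gaussianPdf 0 S y) / r) y)
      (nhdsWithin (0:ℝ) (Set.Ioi 0))
      (nhds (∫ y, A.indicator (fun y => S⁻¹.mulVec y i * gaussianPdf 0 S y) y)) := by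
  obtain ⟨ε, hε, hco⟩ := exists_coercive hS i
  have hcont : ∀ r : ℝ, Continuous (fun y : Fin n → ℝ =>
      (gaussianPdf 0 S (y - r • (Pi.single i 1 : Fin n → ℝ)) - gaussianPdf 0 S y) / r) := by
    intro r
    exact (((continuous_gpdf S).comp (continuous_id.sub continuous_const)).sub
      (continuous_gpdf S)).div_const r
  refine MeasureTheory.tendsto_integral_filter_of_dominated_convergence (gDom S i ε)
    ?_ ?_ (gDom_integrable S i hε) ?_
  · filter_upwards [self_mem_nhdsWithin] with r hr
    exact ((hcont r).aestronglyMeasurable).indicator (hEm r hr)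
  · filter_upwards [Ioc_mem_nhdsGT_of_mem ⟨le_refl (0:ℝ), one_pos⟩] with r hr
    refine Filter.Eventually.of_forall (fun y => ?_)
    calc ‖(E r).indicator (fun y =>
          (gaussianPdf 0 S (y - r • (Pi.single i 1 : Fin n → ℝ)) - gaussianPdf 0 S y) / r) y‖
        ≤ ‖(gaussianPdf 0 S (y - r • (Pi.single i 1 : Fin n → ℝ)) - gaussianPdf 0 S y) / r‖ :=
          norm_indicator_le_norm_self _ _
    _ ≤ gDom S i ε y := by
        rw [Real.norm_eq_abs, abs_div, abs_of_pos hr.1, div_le_iff₀ hr.1]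
        exact gpdf_diff_le hS i hε hco y hr.1 hr.2
  · have hae : ∀ᵐ y ∂(volume : MeasureTheory.Measure (Fin n → ℝ)), y ∉ frontier A := by
      rw [MeasureTheory.ae_iff]
      have : {y : Fin n → ℝ | ¬ y ∉ frontier A} = frontier A := by
        ext y; simp
      rw [this]
      exact hA.volume_frontier
    filter_upwards [hae] with y hy
    have hiff := hconv y hy
    by_cases hyA : y ∈ A
    · rw [Set.indicator_of_mem hyA]
      have : ∀ᶠ r in nhdsWithin (0:ℝ) (Set.Ioi 0), (E r).indicator
          (fun y => (gaussianPdf 0 S (y - r • (Pi.single i 1 : Fin n → ℝ))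
            - gaussianPdf 0 S y) / r) y
          = (gaussianPdf 0 S (y - r • (Pi.single i 1 : Fin n → ℝ)) - gaussianPdf 0 S y) / r := by
        filter_upwards [hiff] with r hr
        exact Set.indicator_of_mem (hr.2 hyA) _
      exact Filter.Tendsto.congr' (this.mono fun r h => h.symm) (tendsto_slope_gpdf hS i y)
    · rw [Set.indicator_of_notMem hyA]
      have : ∀ᶠ r in nhdsWithin (0:ℝ) (Set.Ioi 0), (E r).indicator
          (fun y => (gaussianPdf 0 S (y - r • (Pi.single i 1 : Fin n → ℝ))
            - gaussianPdf 0 S y) / r) y = 0 := by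
        filter_upwards [hiff] with r hr
        exact Set.indicator_of_notMem (fun hmem => hyA (hr.1 hmem)) _
      exact Filter.Tendsto.congr' (this.mono fun r h => h.symm) tendsto_const_nhds

end Aux7
section Aux8

open Filter Set Topology

variable {n : ℕ}

lemma stmt_increasing {S : Matrix (Fin n) (Fin n) ℝ} (hS : S.PosDef)
    {A : Set (Fin n → ℝ)} (hAmeas : MeasurableSet A) (hA : IncreasingSet A)
    (v : Fin n → ℝ) (i : Fin n) :
    Filter.Tendsto
      (fun r : ℝ =>
        (gaussianMeasure 0 S (thicken (thicken A v r) (Pi.single i 1) r) -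
            gaussianMeasure 0 S (thicken A v r)) / ENNReal.ofReal r)
      (nhdsWithin 0 (Set.Ioi 0))
      (nhds (influence (gaussianMeasure 0 S) (Pi.single i 1) A)) := by
  have habs : gaussianMeasure 0 S ≪ (volume : MeasureTheory.Measure (Fin n → ℝ)) :=
    MeasureTheory.withDensity_absolutelyContinuous _ _
  set L : ℝ := ∫ y, A.indicator (fun y => S⁻¹.mulVec y i * gaussianPdf 0 S y) y with hL
  -- the influence equals ofReal L
  have hinfl : influence (gaussianMeasure 0 S) (Pi.single i 1) A = ENNReal.ofReal L := by
    unfold influence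
    have hcong : ∀ᶠ r in nhdsWithin (0:ℝ) (Set.Ioi 0),
        (gaussianMeasure 0 S (thicken A (Pi.single i 1) r) - gaussianMeasure 0 S A)
            / ENNReal.ofReal r
          = ENNReal.ofReal (∫ y, A.indicator (fun y =>
              (gaussianPdf 0 S (y - r • (Pi.single i 1 : Fin n → ℝ)) - gaussianPdf 0 S y) / r) y) := by
      filter_upwards [self_mem_nhdsWithin] with r hr
      rw [thicken_single_eq hA i (le_of_lt hr)]
      exact quotient_eq S hS i hAmeas hr
    rw [Filter.liminf_congr hcong]
    refine Filter.Tendsto.liminf_eq ?_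
    exact ENNReal.tendsto_ofReal
      (main_tendsto hS hA i (fun _ => A) (fun _ _ => hAmeas)
        (fun x _ => Filter.Eventually.of_forall (fun r => Iff.rfl)))
  rw [hinfl]
  -- the main difference quotient
  have hcong2 : ∀ᶠ r in nhdsWithin (0:ℝ) (Set.Ioi 0),
      ENNReal.ofReal (∫ y, (closure (thicken A v r)).indicator (fun y =>
          (gaussianPdf 0 S (y - r • (Pi.single i 1 : Fin n → ℝ)) - gaussianPdf 0 S y) / r) y)
        = (gaussianMeasure 0 S (thicken (thicken A v r) (Pi.single i 1) r) -
            gaussianMeasure 0 S (thicken A v r)) / ENNReal.ofReal r := by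
    filter_upwards [self_mem_nhdsWithin] with r hr
    have hrle : (0:ℝ) ≤ r := le_of_lt hr
    set B : Set (Fin n → ℝ) := thicken A v r with hB
    have hBinc : IncreasingSet B := hA.thicken v r
    have hclosB : MeasurableSet (closure B) := isClosed_closure.measurableSet
    have h1 : thicken B (Pi.single i 1) r
        = (fun x => x + r • (Pi.single i 1 : Fin n → ℝ)) ⁻¹' B :=
      thicken_single_eq hBinc i hrle
    have h2 : gaussianMeasure 0 S B = gaussianMeasure 0 S (closure B) :=
      (measure_closure_eq_of_increasing habs hBinc).symm
    have h3 : gaussianMeasure 0 S ((fun x => x + r • (Pi.single i 1 : Fin n → ℝ)) ⁻¹' B)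
        = gaussianMeasure 0 S ((fun x => x + r • (Pi.single i 1 : Fin n → ℝ)) ⁻¹' closure B) := by
      have hpre : IncreasingSet ((fun x => x + r • (Pi.single i 1 : Fin n → ℝ)) ⁻¹' B) :=
        hBinc.preimage_add _
      have hcl : (fun x => x + r • (Pi.single i 1 : Fin n → ℝ)) ⁻¹' closure B
          = closure ((fun x => x + r • (Pi.single i 1 : Fin n → ℝ)) ⁻¹' B) := by
        exact (Homeomorph.addRight (r • (Pi.single i 1 : Fin n → ℝ))).preimage_closure B
      rw [hcl]
      exact (measure_closure_eq_of_increasing habs hpre).symm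
    rw [h1, h2, h3]
    exact (quotient_eq S hS i hclosB hr).symm
  refine Filter.Tendsto.congr' hcong2 ?_
  refine ENNReal.tendsto_ofReal ?_
  refine main_tendsto hS hA i (fun r => closure (thicken A v r))
    (fun r _ => isClosed_closure.measurableSet) ?_
  intro x hx
  exact eventually_closure_thicken_iff hA v hx

end Aux8
section Aux9

open Filter Set Topology

variable {n : ℕ}

lemma gpdf_neg (S : Matrix (Fin n) (Fin n) ℝ) (y : Fin n → ℝ) :
    gaussianPdf 0 S (-y) = gaussianPdf 0 S y := by
  unfold gaussianPdf
  congr 2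
  rw [sub_zero, sub_zero, Matrix.mulVec_neg, neg_dotProduct, dotProduct_neg,
    neg_neg]

lemma gaussianMeasure_neg_preimage (S : Matrix (Fin n) (Fin n) ℝ) (s : Set (Fin n → ℝ)) :
    gaussianMeasure 0 S ((fun x : Fin n → ℝ => -x) ⁻¹' s) = gaussianMeasure 0 S s := by
  have hmap : (gaussianMeasure 0 S).map (fun x : Fin n → ℝ => -x) = gaussianMeasure 0 S := by
    refine MeasureTheory.Measure.ext (fun t ht => ?_)
    rw [MeasureTheory.Measure.map_apply measurable_neg ht]
    unfold gaussianMeasure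
    rw [MeasureTheory.withDensity_apply _ (ht.preimage measurable_neg),
      MeasureTheory.withDensity_apply _ ht]
    have hmp : MeasureTheory.MeasurePreserving (fun x : Fin n → ℝ => -x) volume volume :=
      MeasureTheory.Measure.measurePreserving_neg volume
    have hemb : MeasurableEmbedding (fun x : Fin n → ℝ => -x) :=
      (MeasurableEquiv.neg (Fin n → ℝ)).measurableEmbedding
    have key := hmp.setLIntegral_comp_preimage_emb hemb
      (fun y => ENNReal.ofReal (gaussianPdf 0 S (-y))) t
    have heq : (fun a : Fin n → ℝ => ENNReal.ofReal (gaussianPdf 0 S (-(-a))))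
        = fun a => ENNReal.ofReal (gaussianPdf 0 S a) := by
      funext a; rw [neg_neg]
    rw [heq] at key
    rw [key]
    congr 1
    funext y
    rw [gpdf_neg]
  have hequiv : MeasureTheory.MeasurePreserving
      (⇑(MeasurableEquiv.neg (Fin n → ℝ))) (gaussianMeasure 0 S) (gaussianMeasure 0 S) := by
    constructor
    · exact measurable_neg
    · exact hmap
  have := hequiv.measure_preimage_equiv s
  simpa using this

lemma neg_preimage_thicken (A : Set (Fin n → ℝ)) (v : Fin n → ℝ) (r : ℝ) :
    (fun x : Fin n → ℝ => -x) ⁻¹' (thicken A v r)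
      = thicken ((fun x : Fin n → ℝ => -x) ⁻¹' A) v r := by
  rw [← thicken_neg ((fun x : Fin n → ℝ => -x) ⁻¹' A) v r]
  ext x
  constructor
  · rintro ⟨a, ha, t, ht, hx⟩
    refine ⟨-a, by simpa using ha, t, ht, ?_⟩
    have : x = -(a + t • v) := by
      rw [← hx]; simp
    rw [this]; simp [smul_neg]; abel
  · rintro ⟨a, ha, t, ht, hx⟩
    refine ⟨-a, by simpa using ha, t, ht, ?_⟩
    rw [hx]; simp [smul_neg]; abel

lemma DecreasingSet.neg_increasing {A : Set (Fin n → ℝ)} (hA : DecreasingSet A) :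
    IncreasingSet ((fun x : Fin n → ℝ => -x) ⁻¹' A) := by
  intro x hx y hxy
  refine hA (-x) hx (-y) ?_
  intro j
  simp only [Pi.neg_apply, neg_le_neg_iff]
  exact hxy j

end Aux9
/-- For a Gaussian measure `μ = N(0,Σ)` and a monotone Borel set `A`, the limit
`lim_{r↓0} [μ(A + [−r,r]eᵢ + [−r,r]v) − μ(A + [−r,r]v)]/r` exists and equals the
influence `I_{i,μ}(A)`. -/
theorem stmt_9 (n : ℕ) (S : Matrix (Fin n) (Fin n) ℝ) (hSsymm : S.IsSymm)
    (hS : S.PosDef) (A : Set (Fin n → ℝ)) (hAmeas : MeasurableSet A)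
    (hA : IncreasingSet A ∨ DecreasingSet A) (v : Fin n → ℝ) (i : Fin n) :
    Filter.Tendsto
      (fun r : ℝ =>
        (gaussianMeasure 0 S (thicken (thicken A v r) (Pi.single i 1) r) -
            gaussianMeasure 0 S (thicken A v r)) / ENNReal.ofReal r)
      (nhdsWithin 0 (Set.Ioi 0))
      (nhds (influence (gaussianMeasure 0 S) (Pi.single i 1) A)) := by
  rcases hA with hinc | hdec
  · exact stmt_increasing hS hAmeas hinc v i
  · set N : (Fin n → ℝ) → (Fin n → ℝ) := fun x => -x with hN
    set A' : Set (Fin n → ℝ) := N ⁻¹' A with hA'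
    have hA'meas : MeasurableSet A' := hAmeas.preimage measurable_neg
    have hA'inc : IncreasingSet A' := hdec.neg_increasing
    have h := stmt_increasing hS hA'meas hA'inc v i
    have hths : ∀ r : ℝ, thicken A' v r = N ⁻¹' (thicken A v r) :=
      fun r => (neg_preimage_thicken A v r).symm
    have hth2 : ∀ r : ℝ, thicken (thicken A' v r) (Pi.single i 1) r
        = N ⁻¹' (thicken (thicken A v r) (Pi.single i 1) r) := by
      intro r
      rw [hths r, ← neg_preimage_thicken]
    have hmu1 : ∀ r : ℝ, gaussianMeasure 0 S (thicken A' v r)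
        = gaussianMeasure 0 S (thicken A v r) := by
      intro r; rw [hths r]; exact gaussianMeasure_neg_preimage S _
    have hmu2 : ∀ r : ℝ, gaussianMeasure 0 S (thicken (thicken A' v r) (Pi.single i 1) r)
        = gaussianMeasure 0 S (thicken (thicken A v r) (Pi.single i 1) r) := by
      intro r; rw [hth2 r]; exact gaussianMeasure_neg_preimage S _
    have hfun : (fun r : ℝ =>
        (gaussianMeasure 0 S (thicken (thicken A' v r) (Pi.single i 1) r) -
          gaussianMeasure 0 S (thicken A' v r)) / ENNReal.ofReal r)
        = fun r : ℝ =>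
        (gaussianMeasure 0 S (thicken (thicken A v r) (Pi.single i 1) r) -
          gaussianMeasure 0 S (thicken A v r)) / ENNReal.ofReal r := by
      funext r; rw [hmu1 r, hmu2 r]
    have hinflu : influence (gaussianMeasure 0 S) (Pi.single i 1) A'
        = influence (gaussianMeasure 0 S) (Pi.single i 1) A := by
      unfold influence
      refine Filter.liminf_congr ?_
      refine Filter.Eventually.of_forall (fun r => ?_)
      rw [show thicken A' (Pi.single i 1) r = N ⁻¹' (thicken A (Pi.single i 1) r) from
        (neg_preimage_thicken A _ r).symm]
      rw [gaussianMeasure_neg_preimage,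
        show gaussianMeasure 0 S A' = gaussianMeasure 0 S A from
          gaussianMeasure_neg_preimage S A]
    rw [hfun, hinflu] at h
    exact h
end
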